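/- (Topological representation theorem of CJS) Let B be a contact join-semilattice. Then there exist a compact, semiregular, T₀ topological space X and a map h from B to the regular closed subsets of X such that h is injective, h(0) = ∅, h(1) = X, h(a + b) = h(a) ∪ h(b) for all a, b, a ≤ b iff h(a) ⊆ h(b), and aCb iff h(a) ∩ h(b) ≠ ∅. -/

import Mathlib

universe u

open Filter TopologicalSpace

section CJSProof

variable {B : Type u} [SemilatticeSup B] [OrderBot B] [OrderTop B]

lemma cjs_sup_mem_of_closed {E : Finset B} (hE : ∀ x ∈ E, ∀ y ∈ E, x ⊔ y ∈ E) :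
    ∀ Q : Finset B, Q ⊆ E → Q.Nonempty → Q.sup id ∈ E := by
  classical
  intro Q
  induction Q using Finset.induction_on with
  | empty => intro _ h; exact absurd h (by simp)
  | @insert x Q' hx ih =>
      intro hsub hne
      by_cases hQ' : Q'.Nonempty
      · have hmem := ih (fun y hy => hsub (Finset.mem_insert_of_mem hy)) hQ'
        rw [Finset.sup_insert]
        exact hE _ (hsub (Finset.mem_insert_self _ _)) _ hmem
      · rw [Finset.not_nonempty_iff_eq_empty] at hQ'
        subst hQ'
        simpa using hsub (Finset.mem_insert_self _ _)

lemma cjs_exists_encode (E : Finset B) {P : Finset B} (hPE : P ⊆ E) (hPne : P.Nonempty) :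
    ∃ q : Fin E.card → {x // x ∈ E},
      (∀ k, (q k).1 ∈ P) ∧ Finset.univ.sup (fun k => (q k).1) = P.sup id := by
  classical
  have hn : 0 < P.card := Finset.card_pos.mpr hPne
  set eqv := P.equivFin with heqv
  refine ⟨fun k => ⟨(eqv.symm (if h : (k : ℕ) < P.card then ⟨k, h⟩ else ⟨0, hn⟩)).1,
      hPE (Finset.coe_mem _)⟩, fun k => Finset.coe_mem _, ?_⟩
  apply le_antisymm
  · exact Finset.sup_le fun k _ => Finset.le_sup (f := id) (Finset.coe_mem _)
  · refine Finset.sup_le fun x hx => ?_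
    have hlt : ((eqv ⟨x, hx⟩ : Fin P.card) : ℕ) < P.card := (eqv ⟨x, hx⟩).2
    have hle : ((eqv ⟨x, hx⟩ : Fin P.card) : ℕ) < E.card :=
      lt_of_lt_of_le hlt (Finset.card_le_card hPE)
    have hx2 : ((eqv.symm (if h : ((⟨(eqv ⟨x, hx⟩ : Fin P.card), hle⟩ : Fin E.card) : ℕ) < P.card
        then ⟨(⟨(eqv ⟨x, hx⟩ : Fin P.card), hle⟩ : Fin E.card), h⟩ else ⟨0, hn⟩)).1) = x := by
      simp [hlt]
    have hle2 := Finset.le_sup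
      (f := fun k : Fin E.card =>
        (eqv.symm (if h : (k : ℕ) < P.card then ⟨k, h⟩ else ⟨0, hn⟩)).1)
      (Finset.mem_univ (⟨(eqv ⟨x, hx⟩ : Fin P.card), hle⟩ : Fin E.card))
    simpa only [hx2, id_eq] using hle2



section Part2
variable {B : Type u} [SemilatticeSup B] [OrderBot B] [OrderTop B]

lemma cjs_zorn_clan [DecidableEq B] (C : B → B → Prop)
    (E : Finset B) (hE : ∀ x ∈ E, ∀ y ∈ E, x ⊔ y ∈ E)
    (Ok : B → Prop)
    (Γ₀ : Finset B) (hΓ₀E : Γ₀ ⊆ E)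
    (hΓ₀up : ∀ x ∈ Γ₀, ∀ y ∈ E, x ≤ y → y ∈ Γ₀)
    (S₀ : Finset B)
    (hS₀E : S₀ ⊆ E)
    (hS₀C : ∀ s ∈ S₀, ∀ t ∈ S₀, C s t)
    (hS₀Ok : ∀ s ∈ S₀, Ok s)
    (hS₀meet : ∀ g ∈ Γ₀, ∀ P : Finset B, P.Nonempty → P ⊆ E → P.sup id = g →
      (S₀ ∩ P).Nonempty) :
    ∃ Γ : Finset B, Γ₀ ⊆ Γ ∧ Γ ⊆ E ∧
      (∀ x ∈ Γ, ∀ y ∈ E, x ≤ y → y ∈ Γ) ∧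
      (∀ x ∈ Γ, ∀ y ∈ Γ, C x y) ∧ (∀ x ∈ Γ, Ok x) ∧
      (∀ g ∈ Γ, ∀ P : Finset B, P.Nonempty → P ⊆ E → P.sup id = g →
        (Γ ∩ P).Nonempty) := by
  classical
  -- witnesses
  let Wit : Finset B → Finset B → Prop := fun Γ S =>
    S ⊆ E ∧ (∀ s ∈ S, ∀ t ∈ S, C s t) ∧ (∀ s ∈ S, Ok s) ∧
    (∀ g ∈ Γ, ∀ P : Finset B, P.Nonempty → P ⊆ E → P.sup id = g → (S ∩ P).Nonempty)
  let Adm : Finset B → Prop := fun Γ =>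
    Γ₀ ⊆ Γ ∧ Γ ⊆ E ∧ (∀ x ∈ Γ, ∀ y ∈ E, x ≤ y → y ∈ Γ) ∧ ∃ S, Wit Γ S
  -- pick a maximal admissible set
  have hA_ne : Γ₀ ∈ E.powerset.filter Adm := by
    refine Finset.mem_filter.mpr ⟨Finset.mem_powerset.mpr hΓ₀E, ?_, hΓ₀E, hΓ₀up, S₀,
      hS₀E, hS₀C, hS₀Ok, hS₀meet⟩
    exact Finset.Subset.refl _
  obtain ⟨Γ, hΓA, hΓmax⟩ :=
    (E.powerset.filter Adm).exists_max_image Finset.card ⟨Γ₀, hA_ne⟩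
  obtain ⟨hΓpow, hΓ₀Γ, hΓE, hΓup, S₁, hWitS₁⟩ := Finset.mem_filter.mp hΓA
  -- pick a minimal witness for Γ
  have hW_ne : S₁ ∈ E.powerset.filter (Wit Γ) :=
    Finset.mem_filter.mpr ⟨Finset.mem_powerset.mpr hWitS₁.1, hWitS₁⟩
  obtain ⟨S, hSW, hSmin⟩ :=
    (E.powerset.filter (Wit Γ)).exists_min_image Finset.card ⟨S₁, hW_ne⟩
  obtain ⟨hSpow, hSE, hSC, hSOk, hSmeet⟩ := Finset.mem_filter.mp hSW
  -- every element of Γ is in S (via singleton decompositions)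
  have hΓS : ∀ x ∈ Γ, x ∈ S := by
    intro x hx
    have := hSmeet x hx {x} ⟨x, Finset.mem_singleton_self x⟩
      (Finset.singleton_subset_iff.mpr (hΓE hx)) Finset.sup_singleton
    obtain ⟨y, hy⟩ := this
    rw [Finset.mem_inter, Finset.mem_singleton] at hy
    exact hy.2 ▸ hy.1
  -- the subclaim
  have sub : ∀ g' ∈ Γ, ∀ Q : Finset B, Q.Nonempty → Q ⊆ E → Q.sup id = g' →
      Γ ∩ Q = ∅ → ∀ q ∈ Q, (S ∩ Q.erase q).Nonempty := by
    intro g' hg' Q hQne hQE hQsup hΓQ q hqQ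
    by_contra hno
    rw [Finset.not_nonempty_iff_eq_empty] at hno
    have hqE : q ∈ E := hQE hqQ
    have hQen : (Q.erase q).Nonempty := by
      rcases Finset.eq_empty_or_nonempty (Q.erase q) with h | h
      · rcases (Finset.erase_eq_empty_iff Q q).mp h with h' | h'
        · exact absurd hqQ (h' ▸ Finset.notMem_empty q)
        · exfalso
          have : q ∈ Γ := by
            have : Q.sup id = q := by rw [h', Finset.sup_singleton]; rfl
            exact (this ▸ hQsup) ▸ hg'
          have : q ∈ Γ ∩ Q := Finset.mem_inter.mpr ⟨this, hqQ⟩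
          rw [hΓQ] at this
          exact Finset.notMem_empty q this
      · exact h
    set M := (Q.erase q).sup id with hM
    have hME : M ∈ E := cjs_sup_mem_of_closed hE _
      (fun y hy => hQE (Finset.mem_of_mem_erase hy)) hQen
    have h1 : (insert q (Q.erase q)).sup id = q ⊔ M := by
      rw [Finset.sup_insert, hM]; rfl
    have hQsup' : q ⊔ M = g' := by
      rw [← h1, Finset.insert_erase hqQ]
      exact hQsup
    -- extended admissible set
    set Γ' := Γ ∪ E.filter (fun y => q ≤ y) with hΓ'
    have hΓ'mem : ∀ y, y ∈ Γ' ↔ y ∈ Γ ∨ (y ∈ E ∧ q ≤ y) := by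
      intro y; simp [hΓ', Finset.mem_filter]
    have hAdmΓ' : Adm Γ' := by
      refine ⟨hΓ₀Γ.trans Finset.subset_union_left, ?_, ?_, S, hSE, hSC, hSOk, ?_⟩
      · exact Finset.union_subset hΓE (Finset.filter_subset _ _)
      · intro x hx y hyE hxy
        rcases (hΓ'mem x).mp hx with h | h
        · exact (hΓ'mem y).mpr (Or.inl (hΓup x h y hyE hxy))
        · exact (hΓ'mem y).mpr (Or.inr ⟨hyE, h.2.trans hxy⟩)
      · intro g₂ hg₂ R hRne hRE hRsup
        rcases (hΓ'mem g₂).mp hg₂ with h | h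
        · exact hSmeet g₂ h R hRne hRE hRsup
        · obtain ⟨hg₂E, hqg₂⟩ := h
          set R' := (Q.erase q) ∪ R with hR'
          have hR'ne : R'.Nonempty := hQen.mono Finset.subset_union_left
          have hR'E : R' ⊆ E := Finset.union_subset
            (fun y hy => hQE (Finset.mem_of_mem_erase hy)) hRE
          have hR'sup : R'.sup id = M ⊔ g₂ := by
            rw [hR', Finset.sup_union, hRsup]
          have hGE : M ⊔ g₂ ∈ E := hE M hME g₂ hg₂E
          have hgG : g' ≤ M ⊔ g₂ := by
            rw [← hQsup']
            exact sup_le (le_trans hqg₂ le_sup_right) le_sup_left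
          have hGΓ : M ⊔ g₂ ∈ Γ := hΓup g' hg' _ hGE hgG
          obtain ⟨z, hz⟩ := hSmeet _ hGΓ R' hR'ne hR'E hR'sup
          rw [Finset.mem_inter, hR', Finset.mem_union] at hz
          rcases hz.2 with h | h
          · exfalso
            have : z ∈ S ∩ Q.erase q := Finset.mem_inter.mpr ⟨hz.1, h⟩
            rw [hno] at this
            exact Finset.notMem_empty z this
          · exact ⟨z, Finset.mem_inter.mpr ⟨hz.1, h⟩⟩
    -- contradiction with maximality
    have hΓ'A : Γ' ∈ E.powerset.filter Adm :=
      Finset.mem_filter.mpr ⟨Finset.mem_powerset.mpr hAdmΓ'.2.1, hAdmΓ'⟩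
    have hqΓ' : q ∈ Γ' := (hΓ'mem q).mpr (Or.inr ⟨hqE, le_refl q⟩)
    have hqΓ : q ∉ Γ := by
      intro h
      have : q ∈ Γ ∩ Q := Finset.mem_inter.mpr ⟨h, hqQ⟩
      rw [hΓQ] at this
      exact Finset.notMem_empty q this
    have hlt : Γ.card < Γ'.card :=
      Finset.card_lt_card ⟨Finset.subset_union_left, fun hsub => hqΓ (hsub hqΓ')⟩
    exact absurd (hΓmax Γ' hΓ'A) (not_le.mpr hlt)
  -- the key property : Γ meets all decompositions of its elements
  have key : ∀ g ∈ Γ, ∀ P : Finset B, P.Nonempty → P ⊆ E → P.sup id = g →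
      (Γ ∩ P).Nonempty := by
    intro g hg P hPne hPE hPsup
    by_contra hcon
    rw [Finset.not_nonempty_iff_eq_empty] at hcon
    obtain ⟨s, hs⟩ := hSmeet g hg P hPne hPE hPsup
    rw [Finset.mem_inter] at hs
    have hsΓ : s ∉ Γ := by
      intro h
      have : s ∈ Γ ∩ P := Finset.mem_inter.mpr ⟨h, hs.2⟩
      rw [hcon] at this
      exact Finset.notMem_empty s this
    -- S.erase s is a smaller witness
    have hWit' : Wit Γ (S.erase s) := by
      refine ⟨(Finset.erase_subset s S).trans hSE,
        fun x hx y hy => hSC x (Finset.mem_of_mem_erase hx) y (Finset.mem_of_mem_erase hy),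
        fun x hx => hSOk x (Finset.mem_of_mem_erase hx), ?_⟩
      intro g₁ hg₁ Q hQne hQE hQsup
      by_cases hΓQ : (Γ ∩ Q).Nonempty
      · obtain ⟨γ, hγ⟩ := hΓQ
        rw [Finset.mem_inter] at hγ
        have hγS : γ ∈ S := hΓS γ hγ.1
        have hγs : γ ≠ s := fun h => hsΓ (h ▸ hγ.1)
        exact ⟨γ, Finset.mem_inter.mpr ⟨Finset.mem_erase.mpr ⟨hγs, hγS⟩, hγ.2⟩⟩
      · rw [Finset.not_nonempty_iff_eq_empty] at hΓQ
        by_cases hsQ : s ∈ Q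
        · obtain ⟨x, hx⟩ := sub g₁ hg₁ Q hQne hQE hQsup hΓQ s hsQ
          rw [Finset.mem_inter, Finset.mem_erase] at hx
          exact ⟨x, Finset.mem_inter.mpr
            ⟨Finset.mem_erase.mpr ⟨hx.2.1, hx.1⟩, hx.2.2⟩⟩
        · obtain ⟨x, hx⟩ := hSmeet g₁ hg₁ Q hQne hQE hQsup
          rw [Finset.mem_inter] at hx
          have hxs : x ≠ s := fun h => hsQ (h ▸ hx.2)
          exact ⟨x, Finset.mem_inter.mpr ⟨Finset.mem_erase.mpr ⟨hxs, hx.1⟩, hx.2⟩⟩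
    have hmem : S.erase s ∈ E.powerset.filter (Wit Γ) :=
      Finset.mem_filter.mpr ⟨Finset.mem_powerset.mpr hWit'.1, hWit'⟩
    have := hSmin _ hmem
    exact absurd this (not_le.mpr (Finset.card_erase_lt_of_mem hs.1))
  exact ⟨Γ, hΓ₀Γ, hΓE, hΓup,
    fun x hx y hy => hSC x (hΓS x hx) y (hΓS y hy),
    fun x hx => hSOk x (hΓS x hx), key⟩

end Part2

section Part3
variable {B : Type u} [SemilatticeSup B] [OrderBot B] [OrderTop B]

lemma cjs_base_witness_C [DecidableEq B] (C : B → B → Prop)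
    (h10 : ∀ a b : B, C a b → C b a)
    (hA1 : ∀ m i : ℕ, 1 ≤ m → 1 ≤ i →
      ∀ (x y : B) (s t : Fin m → B) (s' t' : Fin m → Fin i → B),
      C x y → (∀ j, x ≤ s j) → (∀ j, y ≤ t j) →
      (∀ j, s j = Finset.univ.sup (s' j)) → (∀ j, t j = Finset.univ.sup (t' j)) →
      ∃ l k : Fin m → Fin i,
        (∀ j u, C (s' j (l j)) (s' u (l u))) ∧
        (∀ j u, C (t' j (k j)) (t' u (k u))) ∧
        (∀ j u, C (s' j (l j)) (t' u (k u))))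
    (E : Finset B) (a b : B) (ha : a ∈ E) (hb : b ∈ E) (hab : C a b) :
    ∃ S₀ : Finset B, S₀ ⊆ E ∧ (∀ s ∈ S₀, ∀ t ∈ S₀, C s t) ∧
      (∀ g ∈ E, (a ≤ g ∨ b ≤ g) →
        ∀ P : Finset B, P.Nonempty → P ⊆ E → P.sup id = g → (S₀ ∩ P).Nonempty) := by
  classical
  haveI hEne : Nonempty {x // x ∈ E} := ⟨⟨a, ha⟩⟩
  have hi : 1 ≤ E.card := Finset.card_pos.mpr ⟨a, ha⟩
  haveI : Nonempty (Fin E.card) := ⟨⟨0, hi⟩⟩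
  set m := Fintype.card (Fin E.card → {x // x ∈ E}) with hm_def
  have hm : 1 ≤ m := Fintype.card_pos
  set ee := Fintype.equivFin (Fin E.card → {x // x ∈ E}) with hee
  set F : Fin m → Fin E.card → B := fun j k => ((ee.symm j) k).1 with hF
  set sp : Fin m → B := fun j => Finset.univ.sup (F j) with hsp
  set s : Fin m → B := fun j => if a ≤ sp j then sp j else a with hs
  set s' : Fin m → Fin E.card → B := fun j => if a ≤ sp j then F j else fun _ => a with hs'
  set t : Fin m → B := fun j => if b ≤ sp j then sp j else b with ht
  set t' : Fin m → Fin E.card → B := fun j => if b ≤ sp j then F j else fun _ => b with ht'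
  have hxs : ∀ j, a ≤ s j := by
    intro j; by_cases h : a ≤ sp j <;> simp [hs, h]
  have hyt : ∀ j, b ≤ t j := by
    intro j; by_cases h : b ≤ sp j <;> simp [ht, h]
  have hsdef : ∀ j, s j = Finset.univ.sup (s' j) := by
    intro j; by_cases h : a ≤ sp j
    · have e1 : s j = sp j := if_pos h
      have e2 : s' j = F j := if_pos h
      rw [e1, e2, hsp]
    · simp [hs, hs', h, Finset.sup_const Finset.univ_nonempty]
  have htdef : ∀ j, t j = Finset.univ.sup (t' j) := by
    intro j; by_cases h : b ≤ sp j
    · have e1 : t j = sp j := if_pos h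
      have e2 : t' j = F j := if_pos h
      rw [e1, e2, hsp]
    · simp [ht, ht', h, Finset.sup_const Finset.univ_nonempty]
  obtain ⟨l, kk, hss, htt, hst⟩ := hA1 m E.card hm hi a b s t s' t' hab hxs hyt hsdef htdef
  set S₀ : Finset B :=
    (Finset.univ.image fun j => s' j (l j)) ∪ (Finset.univ.image fun j => t' j (kk j)) with hS₀
  have hmem1 : ∀ j, s' j (l j) ∈ S₀ := fun j =>
    Finset.mem_union_left _ (Finset.mem_image.mpr ⟨j, Finset.mem_univ j, rfl⟩)
  have hmem2 : ∀ j, t' j (kk j) ∈ S₀ := fun j =>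
    Finset.mem_union_right _ (Finset.mem_image.mpr ⟨j, Finset.mem_univ j, rfl⟩)
  have hFE : ∀ j k, F j k ∈ E := fun j k => ((ee.symm j) k).2
  have hS₀E : S₀ ⊆ E := by
    intro x hx
    rw [hS₀, Finset.mem_union] at hx
    rcases hx with hx | hx <;> rw [Finset.mem_image] at hx <;> obtain ⟨j, _, rfl⟩ := hx
    · by_cases h : a ≤ sp j
      · simp only [hs', if_pos h]; exact hFE j (l j)
      · simp only [hs', if_neg h]; exact ha
    · by_cases h : b ≤ sp j
      · simp only [ht', if_pos h]; exact hFE j (kk j)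
      · simp only [ht', if_neg h]; exact hb
  have hS₀C : ∀ x ∈ S₀, ∀ y ∈ S₀, C x y := by
    intro x hx y hy
    rw [hS₀, Finset.mem_union] at hx hy
    rcases hx with hx | hx <;> rcases hy with hy | hy <;>
      rw [Finset.mem_image] at hx hy <;>
      obtain ⟨j, _, rfl⟩ := hx <;> obtain ⟨j', _, rfl⟩ := hy
    · exact hss j j'
    · exact hst j j'
    · exact h10 _ _ (hst j' j)
    · exact htt j j'
  refine ⟨S₀, hS₀E, hS₀C, ?_⟩
  intro g hgE hor P hPne hPE hPsup
  obtain ⟨q, hqP, hqsup⟩ := cjs_exists_encode E hPE hPne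
  have hFq : F (ee q) = fun k => (q k).1 := by
    funext k; rw [hF]; simp [hee]
  have hspq : sp (ee q) = g := by
    simp only [hsp, hFq, hqsup, hPsup]
  rcases hor with hag | hbg
  · have hcond : a ≤ sp (ee q) := hspq ▸ hag
    have hval : s' (ee q) (l (ee q)) = (q (l (ee q))).1 := by
      rw [hs']; simp only [if_pos hcond]; rw [hFq]
    exact ⟨s' (ee q) (l (ee q)), Finset.mem_inter.mpr ⟨hmem1 _, hval ▸ hqP _⟩⟩
  · have hcond : b ≤ sp (ee q) := hspq ▸ hbg
    have hval : t' (ee q) (kk (ee q)) = (q (kk (ee q))).1 := by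
      rw [ht']; simp only [if_pos hcond]; rw [hFq]
    exact ⟨t' (ee q) (kk (ee q)), Finset.mem_inter.mpr ⟨hmem2 _, hval ▸ hqP _⟩⟩

lemma cjs_base_witness_le [DecidableEq B] (C : B → B → Prop)
    (hA : ∀ n i : ℕ, 1 ≤ n → 1 ≤ i →
      ∀ (t u : B) (x : Fin n → B) (x' : Fin n → Fin i → B),
      ¬ t ≤ u → (∀ k, t ≤ x k) → (∀ k, x k = Finset.univ.sup (x' k)) →
      ∃ j : Fin n → Fin i,
        (∀ k, ¬ x' k (j k) ≤ u) ∧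
        (∀ k l, C (x' k (j k)) (x' l (j l))))
    (E : Finset B) (a u : B) (ha : a ∈ E) (hau : ¬ a ≤ u) :
    ∃ S₀ : Finset B, S₀ ⊆ E ∧ (∀ s ∈ S₀, ∀ t ∈ S₀, C s t) ∧ (∀ s ∈ S₀, ¬ s ≤ u) ∧
      (∀ g ∈ E, a ≤ g →
        ∀ P : Finset B, P.Nonempty → P ⊆ E → P.sup id = g → (S₀ ∩ P).Nonempty) := by
  classical
  haveI hEne : Nonempty {x // x ∈ E} := ⟨⟨a, ha⟩⟩
  have hi : 1 ≤ E.card := Finset.card_pos.mpr ⟨a, ha⟩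
  haveI : Nonempty (Fin E.card) := ⟨⟨0, hi⟩⟩
  set m := Fintype.card (Fin E.card → {x // x ∈ E}) with hm_def
  have hm : 1 ≤ m := Fintype.card_pos
  set ee := Fintype.equivFin (Fin E.card → {x // x ∈ E}) with hee
  set F : Fin m → Fin E.card → B := fun j k => ((ee.symm j) k).1 with hF
  set sp : Fin m → B := fun j => Finset.univ.sup (F j) with hsp
  set s : Fin m → B := fun j => if a ≤ sp j then sp j else a with hs
  set s' : Fin m → Fin E.card → B := fun j => if a ≤ sp j then F j else fun _ => a with hs'
  have hxs : ∀ j, a ≤ s j := by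
    intro j; by_cases h : a ≤ sp j <;> simp [hs, h]
  have hsdef : ∀ j, s j = Finset.univ.sup (s' j) := by
    intro j; by_cases h : a ≤ sp j
    · have e1 : s j = sp j := if_pos h
      have e2 : s' j = F j := if_pos h
      rw [e1, e2, hsp]
    · simp [hs, hs', h, Finset.sup_const Finset.univ_nonempty]
  obtain ⟨l, hlu, hss⟩ := hA m E.card hm hi a u s s' hau hxs hsdef
  set S₀ : Finset B := Finset.univ.image fun j => s' j (l j) with hS₀
  have hmem1 : ∀ j, s' j (l j) ∈ S₀ := fun j =>
    Finset.mem_image.mpr ⟨j, Finset.mem_univ j, rfl⟩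
  have hFE : ∀ j k, F j k ∈ E := fun j k => ((ee.symm j) k).2
  have hS₀E : S₀ ⊆ E := by
    intro x hx
    rw [hS₀, Finset.mem_image] at hx
    obtain ⟨j, _, rfl⟩ := hx
    by_cases h : a ≤ sp j
    · simp only [hs', if_pos h]; exact hFE j (l j)
    · simp only [hs', if_neg h]; exact ha
  have hS₀C : ∀ x ∈ S₀, ∀ y ∈ S₀, C x y := by
    intro x hx y hy
    rw [hS₀, Finset.mem_image] at hx hy
    obtain ⟨j, _, rfl⟩ := hx; obtain ⟨j', _, rfl⟩ := hy
    exact hss j j'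
  have hS₀u : ∀ x ∈ S₀, ¬ x ≤ u := by
    intro x hx
    rw [hS₀, Finset.mem_image] at hx
    obtain ⟨j, _, rfl⟩ := hx
    exact hlu j
  refine ⟨S₀, hS₀E, hS₀C, hS₀u, ?_⟩
  intro g hgE hag P hPne hPE hPsup
  obtain ⟨q, hqP, hqsup⟩ := cjs_exists_encode E hPE hPne
  have hFq : F (ee q) = fun k => (q k).1 := by
    funext k; rw [hF]; simp [hee]
  have hspq : sp (ee q) = g := by
    simp only [hsp, hFq, hqsup, hPsup]
  have hcond : a ≤ sp (ee q) := hspq ▸ hag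
  have hval : s' (ee q) (l (ee q)) = (q (l (ee q))).1 := by
    rw [hs']; simp only [if_pos hcond]; rw [hFq]
  exact ⟨s' (ee q) (l (ee q)), Finset.mem_inter.mpr ⟨hmem1 _, hval ▸ hqP _⟩⟩

end Part3

section Part4
variable {B : Type u} [SemilatticeSup B] [OrderBot B] [OrderTop B]

/-- A clan of a contact join-semilattice. -/
def CJSClan (C : B → B → Prop) (Γ : Set B) : Prop :=
  (⊤ : B) ∈ Γ ∧ (∀ x ∈ Γ, ∀ y : B, x ≤ y → y ∈ Γ) ∧
  (∀ x y : B, x ⊔ y ∈ Γ → x ∈ Γ ∨ y ∈ Γ) ∧ (∀ x ∈ Γ, ∀ y ∈ Γ, C x y)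

lemma cjs_finite_clan [DecidableEq B] (C : B → B → Prop)
    (h10 : ∀ a b : B, C a b → C b a)
    (hA1 : ∀ m i : ℕ, 1 ≤ m → 1 ≤ i →
      ∀ (x y : B) (s t : Fin m → B) (s' t' : Fin m → Fin i → B),
      C x y → (∀ j, x ≤ s j) → (∀ j, y ≤ t j) →
      (∀ j, s j = Finset.univ.sup (s' j)) → (∀ j, t j = Finset.univ.sup (t' j)) →
      ∃ l k : Fin m → Fin i,
        (∀ j u, C (s' j (l j)) (s' u (l u))) ∧
        (∀ j u, C (t' j (k j)) (t' u (k u))) ∧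
        (∀ j u, C (s' j (l j)) (t' u (k u))))
    (E : Finset B) (hE : ∀ x ∈ E, ∀ y ∈ E, x ⊔ y ∈ E)
    (a b : B) (ha : a ∈ E) (hb : b ∈ E) (hab : C a b) :
    ∃ Γ : Finset B, Γ ⊆ E ∧ a ∈ Γ ∧ b ∈ Γ ∧
      (∀ x ∈ Γ, ∀ y ∈ E, x ≤ y → y ∈ Γ) ∧
      (∀ x y : B, x ∈ E → y ∈ E → x ⊔ y ∈ Γ → x ∈ Γ ∨ y ∈ Γ) ∧
      (∀ x ∈ Γ, ∀ y ∈ Γ, C x y) := by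
  classical
  obtain ⟨S₀, hS₀E, hS₀C, hS₀meet⟩ := cjs_base_witness_C C h10 hA1 E a b ha hb hab
  set Γ₀ := E.filter (fun g => a ≤ g ∨ b ≤ g) with hΓ₀
  have hΓ₀E : Γ₀ ⊆ E := Finset.filter_subset _ _
  have hΓ₀up : ∀ x ∈ Γ₀, ∀ y ∈ E, x ≤ y → y ∈ Γ₀ := by
    intro x hx y hyE hxy
    rw [hΓ₀, Finset.mem_filter] at hx ⊢
    rcases hx.2 with h | h
    · exact ⟨hyE, Or.inl (h.trans hxy)⟩
    · exact ⟨hyE, Or.inr (h.trans hxy)⟩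
  have hmeet : ∀ g ∈ Γ₀, ∀ P : Finset B, P.Nonempty → P ⊆ E → P.sup id = g →
      (S₀ ∩ P).Nonempty := by
    intro g hg
    rw [hΓ₀, Finset.mem_filter] at hg
    exact hS₀meet g hg.1 hg.2
  obtain ⟨Γ, hΓ₀Γ, hΓE, hΓup, hΓC, _, hkey⟩ :=
    cjs_zorn_clan C E hE (fun _ => True) Γ₀ hΓ₀E hΓ₀up S₀ hS₀E hS₀C (fun _ _ => trivial) hmeet
  have haΓ : a ∈ Γ := hΓ₀Γ (by rw [hΓ₀, Finset.mem_filter]; exact ⟨ha, Or.inl le_rfl⟩)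
  have hbΓ : b ∈ Γ := hΓ₀Γ (by rw [hΓ₀, Finset.mem_filter]; exact ⟨hb, Or.inr le_rfl⟩)
  refine ⟨Γ, hΓE, haΓ, hbΓ, hΓup, ?_, hΓC⟩
  intro x y hxE hyE hxy
  have hsub : ({x, y} : Finset B) ⊆ E := by
    intro z hz
    rw [Finset.mem_insert, Finset.mem_singleton] at hz
    rcases hz with rfl | rfl
    exacts [hxE, hyE]
  have hsup : ({x, y} : Finset B).sup id = x ⊔ y := by
    rw [Finset.sup_insert, Finset.sup_singleton]; rfl
  obtain ⟨z, hz⟩ := hkey _ hxy {x, y} ⟨x, Finset.mem_insert_self x {y}⟩ hsub hsup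
  rw [Finset.mem_inter, Finset.mem_insert, Finset.mem_singleton] at hz
  rcases hz.2 with rfl | rfl
  · exact Or.inl hz.1
  · exact Or.inr hz.1

lemma cjs_finite_clan_le [DecidableEq B] (C : B → B → Prop)
    (hA : ∀ n i : ℕ, 1 ≤ n → 1 ≤ i →
      ∀ (t u : B) (x : Fin n → B) (x' : Fin n → Fin i → B),
      ¬ t ≤ u → (∀ k, t ≤ x k) → (∀ k, x k = Finset.univ.sup (x' k)) →
      ∃ j : Fin n → Fin i,
        (∀ k, ¬ x' k (j k) ≤ u) ∧
        (∀ k l, C (x' k (j k)) (x' l (j l))))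
    (E : Finset B) (hE : ∀ x ∈ E, ∀ y ∈ E, x ⊔ y ∈ E)
    (a u : B) (ha : a ∈ E) (hau : ¬ a ≤ u) :
    ∃ Γ : Finset B, Γ ⊆ E ∧ a ∈ Γ ∧
      (∀ x ∈ Γ, ∀ y ∈ E, x ≤ y → y ∈ Γ) ∧
      (∀ x y : B, x ∈ E → y ∈ E → x ⊔ y ∈ Γ → x ∈ Γ ∨ y ∈ Γ) ∧
      (∀ x ∈ Γ, ∀ y ∈ Γ, C x y) ∧ (∀ x ∈ Γ, ¬ x ≤ u) := by
  classical
  obtain ⟨S₀, hS₀E, hS₀C, hS₀u, hS₀meet⟩ := cjs_base_witness_le C hA E a u ha hau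
  set Γ₀ := E.filter (fun g => a ≤ g) with hΓ₀
  have hΓ₀E : Γ₀ ⊆ E := Finset.filter_subset _ _
  have hΓ₀up : ∀ x ∈ Γ₀, ∀ y ∈ E, x ≤ y → y ∈ Γ₀ := by
    intro x hx y hyE hxy
    rw [hΓ₀, Finset.mem_filter] at hx ⊢
    exact ⟨hyE, hx.2.trans hxy⟩
  have hmeet : ∀ g ∈ Γ₀, ∀ P : Finset B, P.Nonempty → P ⊆ E → P.sup id = g →
      (S₀ ∩ P).Nonempty := by
    intro g hg
    rw [hΓ₀, Finset.mem_filter] at hg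
    exact hS₀meet g hg.1 hg.2
  obtain ⟨Γ, hΓ₀Γ, hΓE, hΓup, hΓC, hΓu, hkey⟩ :=
    cjs_zorn_clan C E hE (fun x => ¬ x ≤ u) Γ₀ hΓ₀E hΓ₀up S₀ hS₀E hS₀C hS₀u hmeet
  have haΓ : a ∈ Γ := hΓ₀Γ (by rw [hΓ₀, Finset.mem_filter]; exact ⟨ha, le_rfl⟩)
  refine ⟨Γ, hΓE, haΓ, hΓup, ?_, hΓC, hΓu⟩
  intro x y hxE hyE hxy
  have hsub : ({x, y} : Finset B) ⊆ E := by
    intro z hz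
    rw [Finset.mem_insert, Finset.mem_singleton] at hz
    rcases hz with rfl | rfl
    exacts [hxE, hyE]
  have hsup : ({x, y} : Finset B).sup id = x ⊔ y := by
    rw [Finset.sup_insert, Finset.sup_singleton]; rfl
  obtain ⟨z, hz⟩ := hkey _ hxy {x, y} ⟨x, Finset.mem_insert_self x {y}⟩ hsub hsup
  rw [Finset.mem_inter, Finset.mem_insert, Finset.mem_singleton] at hz
  rcases hz.2 with rfl | rfl
  · exact Or.inl hz.1
  · exact Or.inr hz.1

/-- the join-closure of a finite set -/
lemma cjs_join_closure [DecidableEq B] (F : Finset B) :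
    ∃ E : Finset B, (∀ x ∈ F, x ∈ E) ∧ (∀ x ∈ E, ∀ y ∈ E, x ⊔ y ∈ E) := by
  classical
  refine ⟨F.powerset.image (fun s => s.sup id), ?_, ?_⟩
  · intro x hx
    exact Finset.mem_image.mpr ⟨{x}, Finset.mem_powerset.mpr
      (Finset.singleton_subset_iff.mpr hx), Finset.sup_singleton⟩
  · intro x hx y hy
    rw [Finset.mem_image] at hx hy
    obtain ⟨s₁, hs₁, rfl⟩ := hx
    obtain ⟨s₂, hs₂, rfl⟩ := hy
    refine Finset.mem_image.mpr ⟨s₁ ∪ s₂, Finset.mem_powerset.mpr ?_, ?_⟩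
    · exact Finset.union_subset (Finset.mem_powerset.mp hs₁) (Finset.mem_powerset.mp hs₂)
    · exact Finset.sup_union

end Part4

section Part5
variable {B : Type u} [SemilatticeSup B] [OrderBot B] [OrderTop B]

lemma cjs_clan_of_C (C : B → B → Prop)
    (h10 : ∀ a b : B, C a b → C b a)
    (hA1 : ∀ m i : ℕ, 1 ≤ m → 1 ≤ i →
      ∀ (x y : B) (s t : Fin m → B) (s' t' : Fin m → Fin i → B),
      C x y → (∀ j, x ≤ s j) → (∀ j, y ≤ t j) →
      (∀ j, s j = Finset.univ.sup (s' j)) → (∀ j, t j = Finset.univ.sup (t' j)) →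
      ∃ l k : Fin m → Fin i,
        (∀ j u, C (s' j (l j)) (s' u (l u))) ∧
        (∀ j u, C (t' j (k j)) (t' u (k u))) ∧
        (∀ j u, C (s' j (l j)) (t' u (k u))))
    {a b : B} (hab : C a b) :
    ∃ Γ : Set B, CJSClan C Γ ∧ a ∈ Γ ∧ b ∈ Γ := by
  classical
  have key : ∀ Fs : Finset B, ∃ E Γ : Finset B,
      (∀ x ∈ insert a (insert b (insert (⊤ : B) Fs)), x ∈ E) ∧
      (∀ x ∈ E, ∀ y ∈ E, x ⊔ y ∈ E) ∧
      Γ ⊆ E ∧ a ∈ Γ ∧ b ∈ Γ ∧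
      (∀ x ∈ Γ, ∀ y ∈ E, x ≤ y → y ∈ Γ) ∧
      (∀ x y : B, x ∈ E → y ∈ E → x ⊔ y ∈ Γ → x ∈ Γ ∨ y ∈ Γ) ∧
      (∀ x ∈ Γ, ∀ y ∈ Γ, C x y) := by
    intro Fs
    obtain ⟨E, hbase, hE⟩ := cjs_join_closure (insert a (insert b (insert (⊤ : B) Fs)))
    have ha : a ∈ E := hbase a (Finset.mem_insert_self _ _)
    have hb : b ∈ E := hbase b (Finset.mem_insert_of_mem (Finset.mem_insert_self _ _))
    obtain ⟨Γ, h1, h2, h3, h4, h5, h6⟩ := cjs_finite_clan C h10 hA1 E hE a b ha hb hab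
    exact ⟨E, Γ, hbase, hE, h1, h2, h3, h4, h5, h6⟩
  choose Ef Γf hbase hEf hΓE haf hbf hup hprime hclique using key
  set U := Ultrafilter.of (atTop : Filter (Finset B)) with hU
  have hUat : ∀ {T : Set (Finset B)}, T ∈ (atTop : Filter (Finset B)) → T ∈ U :=
    fun hT => Ultrafilter.of_le _ hT
  set Γ : Set B := {x | {Fs : Finset B | x ∈ Γf Fs} ∈ U} with hΓ
  have hGmem : ∀ x : B, x ∈ Γ ↔ {Fs : Finset B | x ∈ Γf Fs} ∈ U := fun x => Iff.rfl
  have hinE : ∀ (x : B) (Fs : Finset B), x ∈ Fs → x ∈ Ef Fs := by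
    intro x Fs hx
    exact hbase Fs x (Finset.mem_insert_of_mem (Finset.mem_insert_of_mem
      (Finset.mem_insert_of_mem hx)))
  have htopE : ∀ Fs : Finset B, (⊤ : B) ∈ Ef Fs := fun Fs =>
    hbase Fs ⊤ (Finset.mem_insert_of_mem (Finset.mem_insert_of_mem (Finset.mem_insert_self _ _)))
  refine ⟨Γ, ⟨?_, ?_, ?_, ?_⟩, ?_, ?_⟩
  · -- ⊤ ∈ Γ
    rw [hGmem]
    refine Filter.mem_of_superset Filter.univ_mem ?_
    intro Fs _
    exact hup Fs a (haf Fs) ⊤ (htopE Fs) le_top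
  · -- upward closed
    intro x hx y hxy
    rw [hGmem] at hx ⊢
    have h1 : {Fs : Finset B | ({y} : Finset B) ≤ Fs} ∈ U := hUat (Filter.Ici_mem_atTop _)
    refine Filter.mem_of_superset (Filter.inter_mem hx h1) ?_
    rintro Fs ⟨hx1, hy1⟩
    have hyE : y ∈ Ef Fs := hinE y Fs (hy1 (Finset.mem_singleton_self y))
    exact hup Fs x hx1 y hyE hxy
  · -- prime
    intro x y hxy
    rw [hGmem] at hxy
    have h1 : {Fs : Finset B | ({x, y} : Finset B) ≤ Fs} ∈ U := hUat (Filter.Ici_mem_atTop _)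
    have h2 : {Fs : Finset B | x ∈ Γf Fs} ∪ {Fs : Finset B | y ∈ Γf Fs} ∈ U := by
      refine Filter.mem_of_superset (Filter.inter_mem hxy h1) ?_
      rintro Fs ⟨hxy1, hsub⟩
      have hxE : x ∈ Ef Fs := hinE x Fs (hsub (Finset.mem_insert_self _ _))
      have hyE : y ∈ Ef Fs := hinE y Fs (hsub (Finset.mem_insert_of_mem
        (Finset.mem_singleton_self y)))
      exact hprime Fs x y hxE hyE hxy1
    rcases (Ultrafilter.union_mem_iff).mp h2 with h | h
    · exact Or.inl ((hGmem x).mpr h)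
    · exact Or.inr ((hGmem y).mpr h)
  · -- clique
    intro x hx y hy
    rw [hGmem] at hx hy
    obtain ⟨Fs, hFs⟩ := Ultrafilter.nonempty_of_mem (Filter.inter_mem hx hy)
    exact hclique Fs x hFs.1 y hFs.2
  · rw [hGmem]
    exact Filter.mem_of_superset Filter.univ_mem (fun Fs _ => haf Fs)
  · rw [hGmem]
    exact Filter.mem_of_superset Filter.univ_mem (fun Fs _ => hbf Fs)

lemma cjs_clan_of_nle (C : B → B → Prop)
    (hA : ∀ n i : ℕ, 1 ≤ n → 1 ≤ i →
      ∀ (t u : B) (x : Fin n → B) (x' : Fin n → Fin i → B),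
      ¬ t ≤ u → (∀ k, t ≤ x k) → (∀ k, x k = Finset.univ.sup (x' k)) →
      ∃ j : Fin n → Fin i,
        (∀ k, ¬ x' k (j k) ≤ u) ∧
        (∀ k l, C (x' k (j k)) (x' l (j l))))
    {a u : B} (hau : ¬ a ≤ u) :
    ∃ Γ : Set B, CJSClan C Γ ∧ a ∈ Γ ∧ u ∉ Γ := by
  classical
  have key : ∀ Fs : Finset B, ∃ E Γ : Finset B,
      (∀ x ∈ insert a (insert (⊤ : B) Fs), x ∈ E) ∧
      (∀ x ∈ E, ∀ y ∈ E, x ⊔ y ∈ E) ∧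
      Γ ⊆ E ∧ a ∈ Γ ∧
      (∀ x ∈ Γ, ∀ y ∈ E, x ≤ y → y ∈ Γ) ∧
      (∀ x y : B, x ∈ E → y ∈ E → x ⊔ y ∈ Γ → x ∈ Γ ∨ y ∈ Γ) ∧
      (∀ x ∈ Γ, ∀ y ∈ Γ, C x y) ∧ (∀ x ∈ Γ, ¬ x ≤ u) := by
    intro Fs
    obtain ⟨E, hbase, hE⟩ := cjs_join_closure (insert a (insert (⊤ : B) Fs))
    have ha : a ∈ E := hbase a (Finset.mem_insert_self _ _)
    obtain ⟨Γ, h1, h2, h3, h4, h5, h6⟩ := cjs_finite_clan_le C hA E hE a u ha hau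
    exact ⟨E, Γ, hbase, hE, h1, h2, h3, h4, h5, h6⟩
  choose Ef Γf hbase hEf hΓE haf hup hprime hclique hle using key
  set U := Ultrafilter.of (atTop : Filter (Finset B)) with hU
  have hUat : ∀ {T : Set (Finset B)}, T ∈ (atTop : Filter (Finset B)) → T ∈ U :=
    fun hT => Ultrafilter.of_le _ hT
  set Γ : Set B := {x | {Fs : Finset B | x ∈ Γf Fs} ∈ U} with hΓ
  have hGmem : ∀ x : B, x ∈ Γ ↔ {Fs : Finset B | x ∈ Γf Fs} ∈ U := fun x => Iff.rfl
  have hinE : ∀ (x : B) (Fs : Finset B), x ∈ Fs → x ∈ Ef Fs := by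
    intro x Fs hx
    exact hbase Fs x (Finset.mem_insert_of_mem (Finset.mem_insert_of_mem hx))
  have htopE : ∀ Fs : Finset B, (⊤ : B) ∈ Ef Fs := fun Fs =>
    hbase Fs ⊤ (Finset.mem_insert_of_mem (Finset.mem_insert_self _ _))
  refine ⟨Γ, ⟨?_, ?_, ?_, ?_⟩, ?_, ?_⟩
  · rw [hGmem]
    refine Filter.mem_of_superset Filter.univ_mem ?_
    intro Fs _
    exact hup Fs a (haf Fs) ⊤ (htopE Fs) le_top
  · intro x hx y hxy
    rw [hGmem] at hx ⊢
    have h1 : {Fs : Finset B | ({y} : Finset B) ≤ Fs} ∈ U := hUat (Filter.Ici_mem_atTop _)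
    refine Filter.mem_of_superset (Filter.inter_mem hx h1) ?_
    rintro Fs ⟨hx1, hy1⟩
    have hyE : y ∈ Ef Fs := hinE y Fs (hy1 (Finset.mem_singleton_self y))
    exact hup Fs x hx1 y hyE hxy
  · intro x y hxy
    rw [hGmem] at hxy
    have h1 : {Fs : Finset B | ({x, y} : Finset B) ≤ Fs} ∈ U := hUat (Filter.Ici_mem_atTop _)
    have h2 : {Fs : Finset B | x ∈ Γf Fs} ∪ {Fs : Finset B | y ∈ Γf Fs} ∈ U := by
      refine Filter.mem_of_superset (Filter.inter_mem hxy h1) ?_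
      rintro Fs ⟨hxy1, hsub⟩
      have hxE : x ∈ Ef Fs := hinE x Fs (hsub (Finset.mem_insert_self _ _))
      have hyE : y ∈ Ef Fs := hinE y Fs (hsub (Finset.mem_insert_of_mem
        (Finset.mem_singleton_self y)))
      exact hprime Fs x y hxE hyE hxy1
    rcases (Ultrafilter.union_mem_iff).mp h2 with h | h
    · exact Or.inl ((hGmem x).mpr h)
    · exact Or.inr ((hGmem y).mpr h)
  · intro x hx y hy
    rw [hGmem] at hx hy
    obtain ⟨Fs, hFs⟩ := Ultrafilter.nonempty_of_mem (Filter.inter_mem hx hy)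
    exact hclique Fs x hFs.1 y hFs.2
  · rw [hGmem]
    exact Filter.mem_of_superset Filter.univ_mem (fun Fs _ => haf Fs)
  · intro h
    rw [hGmem] at h
    obtain ⟨Fs, hFs⟩ := Ultrafilter.nonempty_of_mem h
    exact hle Fs u hFs le_rfl

end Part5



end CJSProof

/-- Topological representation theorem of CJS: every contact
join-semilattice embeds isomorphically into the regular closed subsets of some
compact, semiregular, T₀ topological space, with contact given by nonempty
intersection. Semiregularity means that the regular open sets
(`u = interior (closure u)`) form a base of the topology. -/
theorem stmt_12 {B : Type u} [SemilatticeSup B] [OrderBot B] [OrderTop B]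
    (C : B → B → Prop)
    (h9 : ∀ a b : B, C a b → a ≠ ⊥)
    (h10 : ∀ a b : B, C a b → C b a)
    (hA1 : ∀ m i : ℕ, 1 ≤ m → 1 ≤ i →
      ∀ (x y : B) (s t : Fin m → B) (s' t' : Fin m → Fin i → B),
      C x y → (∀ j, x ≤ s j) → (∀ j, y ≤ t j) →
      (∀ j, s j = Finset.univ.sup (s' j)) → (∀ j, t j = Finset.univ.sup (t' j)) →
      ∃ l k : Fin m → Fin i,
        (∀ j u, C (s' j (l j)) (s' u (l u))) ∧
        (∀ j u, C (t' j (k j)) (t' u (k u))) ∧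
        (∀ j u, C (s' j (l j)) (t' u (k u))))
    (hA : ∀ n i : ℕ, 1 ≤ n → 1 ≤ i →
      ∀ (t u : B) (x : Fin n → B) (x' : Fin n → Fin i → B),
      ¬ t ≤ u → (∀ k, t ≤ x k) → (∀ k, x k = Finset.univ.sup (x' k)) →
      ∃ j : Fin n → Fin i,
        (∀ k, ¬ x' k (j k) ≤ u) ∧
        (∀ k l, C (x' k (j k)) (x' l (j l)))) :
    ∃ (X : Type u) (_ : TopologicalSpace X),
      CompactSpace X ∧ T0Space X ∧
      TopologicalSpace.IsTopologicalBasis {v : Set X | v = interior (closure v)} ∧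
      ∃ h : B → Set X,
        (∀ a : B, h a = closure (interior (h a))) ∧
        Function.Injective h ∧
        h ⊥ = ∅ ∧ h ⊤ = Set.univ ∧
        (∀ a b : B, h (a ⊔ b) = h a ∪ h b) ∧
        (∀ a b : B, a ≤ b ↔ h a ⊆ h b) ∧
        (∀ a b : B, C a b ↔ (h a ∩ h b).Nonempty) := by
  classical
  refine ⟨{Γ : Set B // CJSClan C Γ}, TopologicalSpace.generateFrom
    {v | ∃ e : B, v = {Γ : {Γ : Set B // CJSClan C Γ} | e ∈ Γ.val} ∨
      v = {Γ : {Γ : Set B // CJSClan C Γ} | e ∈ Γ.val}ᶜ}, ?_⟩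
  set X := {Γ : Set B // CJSClan C Γ} with hX
  set hmap : B → Set X := fun e => {Γ : X | e ∈ Γ.val} with hhmap
  set sub : Set (Set X) := {v | ∃ e : B, v = hmap e ∨ v = (hmap e)ᶜ} with hsub
  letI : TopologicalSpace X := TopologicalSpace.generateFrom sub
  -- basic facts
  have hopen : ∀ e, IsOpen (hmap e) :=
    fun e => TopologicalSpace.isOpen_generateFrom_of_mem ⟨e, Or.inl rfl⟩
  have hopenc : ∀ e, IsOpen (hmap e)ᶜ :=
    fun e => TopologicalSpace.isOpen_generateFrom_of_mem ⟨e, Or.inr rfl⟩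
  have hclosed : ∀ e, IsClosed (hmap e) := fun e => ⟨hopenc e⟩
  have hclopen_sub : ∀ v ∈ sub, IsClopen v := by
    rintro v ⟨e, rfl | rfl⟩
    · exact ⟨hclosed e, hopen e⟩
    · exact ⟨⟨by rw [compl_compl]; exact hopen e⟩, hopenc e⟩
  have hsunion : ∀ a b : B, hmap (a ⊔ b) = hmap a ∪ hmap b := by
    intro a b
    ext Γ
    simp only [hhmap, Set.mem_setOf_eq, Set.mem_union]
    constructor
    · intro h
      exact Γ.2.2.2.1 a b h
    · rintro (h | h)
      · exact Γ.2.2.1 a h (a ⊔ b) le_sup_left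
      · exact Γ.2.2.1 b h (a ⊔ b) le_sup_right
  have hstop : hmap ⊤ = Set.univ := Set.eq_univ_iff_forall.mpr (fun Γ => Γ.2.1)
  have hsbot : hmap ⊥ = ∅ := by
    rw [Set.eq_empty_iff_forall_notMem]
    intro Γ hΓ
    exact h9 ⊥ ⊥ (Γ.2.2.2.2 ⊥ hΓ ⊥ hΓ) rfl
  have hsle : ∀ a b : B, a ≤ b ↔ hmap a ⊆ hmap b := by
    intro a b
    constructor
    · intro hab Γ hΓ
      exact Γ.2.2.1 a hΓ b hab
    · intro hsub2
      by_contra hab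
      obtain ⟨Γ, hΓclan, haΓ, hbΓ⟩ := cjs_clan_of_nle C hA hab
      have hmem : (⟨Γ, hΓclan⟩ : X) ∈ hmap a := haΓ
      exact hbΓ (hsub2 hmem)
  refine ⟨?_, ?_, ?_, hmap, ?_, ?_, hsbot, hstop, hsunion, hsle, ?_⟩
  · -- compactness
    refine ⟨?_⟩
    rw [isCompact_iff_ultrafilter_le_nhds]
    intro V _
    have hclan : CJSClan C {e : B | hmap e ∈ V} := by
      refine ⟨?_, ?_, ?_, ?_⟩
      · show hmap ⊤ ∈ V
        rw [hstop]; exact Filter.univ_mem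
      · intro x hx y hxy
        exact Filter.mem_of_superset hx (fun Γ hΓ => Γ.2.2.1 x hΓ y hxy)
      · intro x y hxy
        have : hmap x ∪ hmap y ∈ V := by
          rw [← hsunion]; exact hxy
        exact Ultrafilter.union_mem_iff.mp this
      · intro x hx y hy
        obtain ⟨Δ, hΔ⟩ := Ultrafilter.nonempty_of_mem (Filter.inter_mem hx hy)
        exact Δ.2.2.2.2 x hΔ.1 y hΔ.2
    refine ⟨⟨{e : B | hmap e ∈ V}, hclan⟩, Set.mem_univ _, ?_⟩
    rw [TopologicalSpace.nhds_generateFrom]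
    refine le_iInf₂ ?_
    rintro s ⟨hpt, e, rfl | rfl⟩
    · exact Filter.le_principal_iff.mpr hpt
    · exact Filter.le_principal_iff.mpr (Ultrafilter.compl_mem_iff_notMem.mpr hpt)
  · -- T0
    rw [t0Space_iff_inseparable]
    intro Γ Δ hins
    have h1 := inseparable_iff_forall_isOpen.mp hins
    refine Subtype.ext (Set.ext fun e => ?_)
    exact h1 (hmap e) (hopen e)
  · -- semiregular basis
    refine TopologicalSpace.isTopologicalBasis_of_isOpen_of_nhds ?_ ?_
    · intro w hw
      rw [Set.mem_setOf_eq] at hw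
      rw [hw]
      exact isOpen_interior
    · intro x w hxw hw
      obtain ⟨v, hv, hxv, hvw⟩ :=
        (TopologicalSpace.isTopologicalBasis_of_subbasis rfl).exists_subset_of_mem_open hxw hw
      obtain ⟨f, ⟨hf_fin, hf_sub⟩, rfl⟩ := hv
      have hcl : IsClopen (⋂₀ f) :=
        ⟨isClosed_sInter (fun s hss => (hclopen_sub s (hf_sub hss)).1),
         hf_fin.isOpen_sInter (fun s hss => (hclopen_sub s (hf_sub hss)).2)⟩
      refine ⟨⋂₀ f, ?_, hxv, hvw⟩
      rw [Set.mem_setOf_eq, hcl.1.closure_eq, hcl.2.interior_eq]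
  · -- regular closed
    intro a
    rw [(hopen a).interior_eq, (hclosed a).closure_eq]
  · -- injective
    intro a b hab
    exact le_antisymm ((hsle a b).mpr (le_of_eq hab)) ((hsle b a).mpr (ge_of_eq hab))
  · -- contact
    intro a b
    constructor
    · intro hab
      obtain ⟨Γ, hΓclan, haΓ, hbΓ⟩ := cjs_clan_of_C C h10 hA1 hab
      exact ⟨⟨Γ, hΓclan⟩, haΓ, hbΓ⟩
    · rintro ⟨Γ, haΓ, hbΓ⟩
      exact Γ.2.2.2.2 a haΓ b hbΓ
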